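/- arXiv:2412.01610 — 3 statements merged into one kernel-verified Lean document; each statement's English description precedes it below -/
import Mathlib

section
/- For every r > 0, all real θ, φ, and every phase ω ∈ (−π/2, π/2), the satellite position X(θ, ω, φ, r) lies in the orbital plane through the origin with unit normal n(θ, φ) = (sin θ · sin φ, −cos θ · sin φ, cos φ); that is, the Euclidean inner product ⟨X(θ, ω, φ, r), n(θ, φ)⟩ equals 0. -/
open Real

/-- The position of a satellite with orbit longitude `θ`, phase `ω`, orbit inclination
`φ` and orbit radius `r`:
`X(θ, ω, φ, r) = (r·ρ·cos(θ̂ + θ), r·ρ·sin(θ̂ + θ), r·sin ω·sin φ)`, where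
`ρ = √(cos²ω + sin²ω·cos²φ)` and `θ̂ = arctan(tan ω · cos φ)`. -/
noncomputable def satPos (θ ω φ r : ℝ) : EuclideanSpace ℝ (Fin 3) :=
  WithLp.toLp 2 ![r * Real.sqrt (cos ω ^ 2 + sin ω ^ 2 * cos φ ^ 2) *
      cos (arctan (tan ω * cos φ) + θ),
    r * Real.sqrt (cos ω ^ 2 + sin ω ^ 2 * cos φ ^ 2) *
      sin (arctan (tan ω * cos φ) + θ),
    r * sin ω * sin φ]

/-- The unit normal of the orbital plane with ascending-node longitude `θ` and
inclination `φ`: `n(θ, φ) = (sin θ · sin φ, −cos θ · sin φ, cos φ)`. -/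
noncomputable def orbitNormal (θ φ : ℝ) : EuclideanSpace ℝ (Fin 3) :=
  WithLp.toLp 2 ![sin θ * sin φ, -cos θ * sin φ, cos φ]

/-- **Satellites lie in their orbital plane.**
For every `r > 0`, all real `θ, φ`, and every phase `ω ∈ (−π/2, π/2)`, the satellite
position `X(θ, ω, φ, r)` is orthogonal to the unit normal `n(θ, φ)` of the orbital
plane through the origin, i.e. `⟨X(θ, ω, φ, r), n(θ, φ)⟩ = 0`. -/
theorem satPos_mem_orbitalPlane (r : ℝ) (hr : 0 < r) (θ φ ω : ℝ)
    (hω : ω ∈ Set.Ioo (-(π / 2)) (π / 2)) :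
    (inner ℝ (satPos θ ω φ r) (orbitNormal θ φ) : ℝ) = 0 := by
  have hc : 0 < cos ω := cos_pos_of_mem_Ioo hω
  have hs : (0:ℝ) < Real.sqrt (1 + (tan ω * cos φ) ^ 2) :=
    Real.sqrt_pos.mpr (by positivity)
  have hkey : Real.sqrt (cos ω ^ 2 + sin ω ^ 2 * cos φ ^ 2)
      * sin (arctan (tan ω * cos φ)) = sin ω * cos φ := by
    have h1 : cos ω ^ 2 + sin ω ^ 2 * cos φ ^ 2
        = cos ω ^ 2 * (1 + (tan ω * cos φ) ^ 2) := by
      rw [tan_eq_sin_div_cos]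
      field_simp [hc.ne']
    rw [sin_arctan, h1, Real.sqrt_mul (sq_nonneg _), Real.sqrt_sq hc.le]
    rw [tan_eq_sin_div_cos]
    field_simp [hc.ne']
  simp only [satPos, orbitNormal, PiLp.inner_apply, RCLike.inner_apply,
    Fin.sum_univ_three, Matrix.cons_val_zero, Matrix.cons_val_one,
    Matrix.head_cons, Matrix.cons_val_two, Matrix.tail_cons,
    starRingEnd_apply, star_trivial, cos_add, sin_add]
  linear_combination (-(r * sin φ)) * hkey +
    (-(r * Real.sqrt (cos ω ^ 2 + sin ω ^ 2 * cos φ ^ 2) *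
      sin (arctan (tan ω * cos φ)) * sin φ)) * (sin_sq_add_cos_sq θ)
end

section
/- Let 0 < e < r, let N_o, N_s ≥ 1 be integers, let φ, l_u ∈ ℝ, and let θ̄ and ω̄ be independent random variables uniformly distributed on [0, 2π/N_o] and [0, 2π/N_s] respectively. Let D = min over i = 1,…,N_o and j = 1,…,N_s of ‖X_{i,j} − u‖. Then for every d with r − e < d < √(r² − e²), the complementary distribution function satisfies: P(D > d) = (N_o·N_s/(4π²)) · ∫₀^{2π/N_o} ∫₀^{2π/N_s} 1{ max_{i,j} ⟨X_{i,j}(θ̄', ω̄'), u⟩/(r·e) < (r² + e² − d²)/(2·r·e) } dω̄' dθ̄', where inside the integral the satellite positions X_{i,j}(θ̄', ω̄') are computed from the deterministic offsets (θ̄', ω̄'). -/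
open Real MeasureTheory ProbabilityTheory
open scoped Classical ENNReal

/-- The typical user at latitude `l` on the Earth sphere of radius `e`:
`u = (e·cos l, 0, e·sin l)`. -/
noncomputable def userPos (e l : ℝ) : EuclideanSpace ℝ (Fin 3) :=
  WithLp.toLp 2 ![e * cos l, 0, e * sin l]

/-- The position `X_{i,j}` of the `j`-th satellite on the `i`-th orbit of a Walker
constellation with `No` orbits, `Ns` satellites per orbit, inclination `φ`, orbit
radius `r` and offsets `(θ̄, ω̄)`: the orbit longitude is `θ_i = 2πi/No + θ̄` and the
satellite phase is `ω_j = 2πj/Ns + ω̄`. -/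
noncomputable def satXij (No Ns : ℕ) (φ r θb ωb : ℝ) (i : Fin No) (j : Fin Ns) :
    EuclideanSpace ℝ (Fin 3) :=
  satPos (2 * π * ((i : ℕ) + 1) / No + θb) (2 * π * ((j : ℕ) + 1) / Ns + ωb) φ r

lemma norm_satPos (θ ω φ : ℝ) {r : ℝ} (hr : 0 ≤ r) : ‖satPos θ ω φ r‖ = r := by
  have h1 : Real.sqrt (cos ω ^ 2 + sin ω ^ 2 * cos φ ^ 2) ^ 2
      = cos ω ^ 2 + sin ω ^ 2 * cos φ ^ 2 :=
    Real.sq_sqrt (by positivity)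
  have h2 := sin_sq_add_cos_sq ω
  have h3 := sin_sq_add_cos_sq φ
  have h4 := sin_sq_add_cos_sq (arctan (tan ω * cos φ) + θ)
  rw [EuclideanSpace.norm_eq]
  rw [show r = Real.sqrt (r ^ 2) from (Real.sqrt_sq hr).symm]
  congr 1
  rw [Real.sqrt_sq hr]
  simp only [satPos, Fin.sum_univ_three, Matrix.cons_val_zero, Matrix.cons_val_one,
    Matrix.head_cons, Matrix.cons_val_two, Matrix.tail_cons, Real.norm_eq_abs, sq_abs,
    PiLp.toLp_apply]
  linear_combination (r ^ 2) * h1 +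
    (r ^ 2 * Real.sqrt (cos ω ^ 2 + sin ω ^ 2 * cos φ ^ 2) ^ 2) * h4 +
    (r ^ 2) * h2 + (r ^ 2 * sin ω ^ 2) * h3

lemma norm_userPos (l : ℝ) {e : ℝ} (he : 0 ≤ e) : ‖userPos e l‖ = e := by
  have h3 := sin_sq_add_cos_sq l
  rw [EuclideanSpace.norm_eq]
  rw [show e = Real.sqrt (e ^ 2) from (Real.sqrt_sq he).symm]
  congr 1
  rw [Real.sqrt_sq he]
  simp only [userPos, Fin.sum_univ_three, Matrix.cons_val_zero, Matrix.cons_val_one,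
    Matrix.head_cons, Matrix.cons_val_two, Matrix.tail_cons, Real.norm_eq_abs, sq_abs,
    PiLp.toLp_apply]
  linear_combination (e ^ 2) * h3

lemma dist_iff {a b : EuclideanSpace ℝ (Fin 3)} {r e d : ℝ} (ha : ‖a‖ = r) (hb : ‖b‖ = e)
    (hr : 0 < r) (he : 0 < e) (hd : 0 < d) :
    (d < ‖a - b‖) ↔ (inner ℝ a b : ℝ) / (r * e) < (r ^ 2 + e ^ 2 - d ^ 2) / (2 * r * e) := by
  have hsq : ‖a - b‖ ^ 2 = r ^ 2 - 2 * (inner ℝ a b : ℝ) + e ^ 2 := by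
    rw [@norm_sub_sq_real, ha, hb]
  have h1 : (d < ‖a - b‖) ↔ d ^ 2 < ‖a - b‖ ^ 2 := by
    constructor
    · intro h; nlinarith [norm_nonneg (a - b)]
    · intro h; nlinarith [norm_nonneg (a - b)]
  rw [h1, hsq, div_lt_div_iff₀ (by positivity) (by positivity)]
  constructor
  · intro h
    nlinarith [mul_pos (show (0:ℝ) < r ^ 2 + e ^ 2 - 2 * (inner ℝ a b : ℝ) - d ^ 2 by linarith)
      (mul_pos hr he)]
  · intro h
    nlinarith [mul_pos hr he, mul_pos (mul_pos hr he) he, sq_nonneg (r - e)]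

lemma measurable_inner_satPos (φ r e l a b : ℝ) :
    Measurable fun p : ℝ × ℝ =>
      (inner ℝ (satPos (a + p.1) (b + p.2) φ r) (userPos e l) : ℝ) := by
  have htan : Measurable Real.tan := by
    have : Real.tan = fun x => Real.sin x / Real.cos x := funext fun x => Real.tan_eq_sin_div_cos x
    rw [this]; exact Real.measurable_sin.div Real.measurable_cos
  simp only [satPos, userPos, PiLp.inner_apply, Fin.sum_univ_three, Matrix.cons_val_zero,
    Matrix.cons_val_one, Matrix.head_cons, Matrix.cons_val_two, Matrix.tail_cons,
    RCLike.inner_apply, conj_trivial, PiLp.toLp_apply]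
  have h1 : Measurable fun p : ℝ × ℝ => a + p.1 := measurable_const.add measurable_fst
  have h2 : Measurable fun p : ℝ × ℝ => b + p.2 := measurable_const.add measurable_snd
  have hsin : Measurable fun p : ℝ × ℝ => Real.sin (b + p.2) := Real.measurable_sin.comp h2
  have hcos : Measurable fun p : ℝ × ℝ => Real.cos (b + p.2) := Real.measurable_cos.comp h2
  have hsqrt : Measurable fun p : ℝ × ℝ =>
      Real.sqrt (cos (b + p.2) ^ 2 + sin (b + p.2) ^ 2 * cos φ ^ 2) :=
    (continuous_sqrt.measurable).comp ((hcos.pow_const 2).add ((hsin.pow_const 2).mul_const _))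
  have hang : Measurable fun p : ℝ × ℝ => arctan (tan (b + p.2) * cos φ) + (a + p.1) :=
    (measurable_arctan.comp ((htan.comp h2).mul_const _)).add h1
  simp only [mul_comm (e * cos l), mul_comm (0:ℝ), mul_comm (e * sin l)]
  exact ((((measurable_const.mul hsqrt).mul
      (Real.measurable_cos.comp hang)).mul_const _).add
    ((((measurable_const.mul hsqrt).mul (Real.measurable_sin.comp hang)).mul_const _))).add
    (((measurable_const.mul hsin).mul_const _).mul_const _)

lemma ciSup_lt_iff' {ι : Type*} [Nonempty ι] [Finite ι] (f : ι → ℝ) (a : ℝ) :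
    (⨆ i, f i) < a ↔ ∀ i, f i < a := by
  constructor
  · intro h i
    exact lt_of_le_of_lt (le_ciSup (Set.Finite.bddAbove (Set.finite_range f)) i) h
  · intro h
    obtain ⟨i, hi⟩ := exists_eq_ciSup_of_finite (f := f)
    rw [← hi]; exact h i

lemma lt_ciInf_iff' {ι : Type*} [Nonempty ι] [Finite ι] (f : ι → ℝ) (a : ℝ) :
    a < (⨅ i, f i) ↔ ∀ i, a < f i := by
  constructor
  · intro h i
    exact lt_of_lt_of_le h (ciInf_le (Set.Finite.bddBelow (Set.finite_range f)) i)
  · intro h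
    obtain ⟨i, hi⟩ := exists_eq_ciInf_of_finite (f := f)
    rw [← hi]; exact h i

lemma prod_smul_apply {μ ν : Measure ℝ} [SigmaFinite μ] [SigmaFinite ν] (a b : ℝ≥0∞)
    {A : Set (ℝ × ℝ)} (hA : MeasurableSet A) :
    ((a • μ).prod (b • ν)) A = a * (b * (μ.prod ν) A) := by
  rw [Measure.prod_apply hA, Measure.prod_apply hA, lintegral_smul_measure]
  congr 1
  rw [← lintegral_const_mul b (measurable_measure_prodMk_left hA)]
  simp

/-- **Theorem 3 (CCDF of the distance to the nearest satellite).**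
Let `0 < e < r`, `No, Ns ≥ 1`, and let `θ̄, ω̄` be independent random variables
uniform on `[0, 2π/No]` and `[0, 2π/Ns]` respectively. Let
`D = min_{i,j} ‖X_{i,j} − u‖` be the distance from the typical user
`u = (e·cos l_u, 0, e·sin l_u)` to its nearest satellite. Then for every
`d ∈ (r − e, √(r² − e²))`,
`P(D > d) = (No·Ns/(4π²)) ∫₀^{2π/No} ∫₀^{2π/Ns}
  1{max_{i,j} ⟨X_{i,j}(θ̄', ω̄'), u⟩/(r·e) < (r² + e² − d²)/(2·r·e)} dω̄' dθ̄'`. -/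
theorem ccdf_nearest_satellite_distance
    {Ω : Type*} [MeasureSpace Ω] [IsProbabilityMeasure (ℙ : Measure Ω)]
    (r e : ℝ) (he : 0 < e) (her : e < r)
    (No Ns : ℕ) (hNo : 1 ≤ No) (hNs : 1 ≤ Ns)
    (φ lu : ℝ)
    (θb ωb : Ω → ℝ)
    (hθ : pdf.IsUniform θb (Set.Icc 0 (2 * π / No)) ℙ volume)
    (hω : pdf.IsUniform ωb (Set.Icc 0 (2 * π / Ns)) ℙ volume)
    (hindep : IndepFun θb ωb ℙ)
    (d : ℝ) (hd1 : r - e < d) (hd2 : d < Real.sqrt (r ^ 2 - e ^ 2)) :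
    ℙ {x | d < ⨅ ij : Fin No × Fin Ns,
        ‖satXij No Ns φ r (θb x) (ωb x) ij.1 ij.2 - userPos e lu‖} =
      ENNReal.ofReal ((No * Ns / (4 * π ^ 2)) *
        ∫ θ' in (0 : ℝ)..(2 * π / No), ∫ ω' in (0 : ℝ)..(2 * π / Ns),
          if (⨆ ij : Fin No × Fin Ns,
                (inner ℝ (satXij No Ns φ r θ' ω' ij.1 ij.2) (userPos e lu) : ℝ) /
                  (r * e)) <
              (r ^ 2 + e ^ 2 - d ^ 2) / (2 * r * e)
          then (1 : ℝ) else 0) := by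
  have hr : 0 < r := he.trans her
  have hd0 : 0 < d := by linarith
  have hNo0 : (0 : ℝ) < No := by exact_mod_cast hNo
  have hNs0 : (0 : ℝ) < Ns := by exact_mod_cast hNs
  set c1 : ℝ := 2 * π / No with hc1
  set c2 : ℝ := 2 * π / Ns with hc2
  have hc1pos : 0 < c1 := by positivity
  have hc2pos : 0 < c2 := by positivity
  set C : ℝ := (r ^ 2 + e ^ 2 - d ^ 2) / (2 * r * e) with hC
  set u : EuclideanSpace ℝ (Fin 3) := userPos e lu with hu
  have : Nonempty (Fin No × Fin Ns) := ⟨⟨⟨0, hNo⟩, ⟨0, hNs⟩⟩⟩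
  set A : Set (ℝ × ℝ) :=
    {p | ∀ ij : Fin No × Fin Ns,
      (inner ℝ (satXij No Ns φ r p.1 p.2 ij.1 ij.2) u : ℝ) / (r * e) < C} with hA
  have hmeasf : ∀ ij : Fin No × Fin Ns, Measurable fun p : ℝ × ℝ =>
      (inner ℝ (satXij No Ns φ r p.1 p.2 ij.1 ij.2) u : ℝ) / (r * e) := by
    intro ij
    exact (measurable_inner_satPos φ r e lu _ _).div_const _
  have hAmeas : MeasurableSet A := by
    have : A = ⋂ ij : Fin No × Fin Ns,
        {p : ℝ × ℝ | (inner ℝ (satXij No Ns φ r p.1 p.2 ij.1 ij.2) u : ℝ) / (r * e) < C} := by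
      ext p; simp [hA]
    rw [this]
    exact MeasurableSet.iInter fun ij => measurableSet_lt (hmeasf ij) measurable_const
  -- norms
  have hnormX : ∀ (θ' ω' : ℝ) (ij : Fin No × Fin Ns),
      ‖satXij No Ns φ r θ' ω' ij.1 ij.2‖ = r := fun θ' ω' ij => norm_satPos _ _ _ hr.le
  have hnormu : ‖u‖ = e := norm_userPos _ he.le
  -- step A: event as preimage
  have hEvent : {x | d < ⨅ ij : Fin No × Fin Ns,
      ‖satXij No Ns φ r (θb x) (ωb x) ij.1 ij.2 - u‖} =
      (fun x => (θb x, ωb x)) ⁻¹' A := by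
    ext x
    simp only [Set.mem_setOf_eq, Set.mem_preimage, hA]
    rw [lt_ciInf_iff']
    exact forall_congr' fun ij => dist_iff (hnormX _ _ ij) hnormu hr he hd0
  -- measures
  have hI1 : volume (Set.Icc (0:ℝ) c1) = ENNReal.ofReal c1 := by
    rw [Real.volume_Icc, sub_zero]
  have hI2 : volume (Set.Icc (0:ℝ) c2) = ENNReal.ofReal c2 := by
    rw [Real.volume_Icc, sub_zero]
  have hns1 : volume (Set.Icc (0:ℝ) c1) ≠ 0 := by
    rw [hI1]; simp [ENNReal.ofReal_eq_zero, not_le, hc1pos]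
  have hns2 : volume (Set.Icc (0:ℝ) c2) ≠ 0 := by
    rw [hI2]; simp [ENNReal.ofReal_eq_zero, not_le, hc2pos]
  have hnt1 : volume (Set.Icc (0:ℝ) c1) ≠ ⊤ := by rw [hI1]; exact ENNReal.ofReal_ne_top
  have hnt2 : volume (Set.Icc (0:ℝ) c2) ≠ ⊤ := by rw [hI2]; exact ENNReal.ofReal_ne_top
  have hmθ : AEMeasurable θb ℙ := hθ.aemeasurable hns1 hnt1
  have hmω : AEMeasurable ωb ℙ := hω.aemeasurable hns2 hnt2
  have hpair : AEMeasurable (fun x => (θb x, ωb x)) ℙ := hmθ.prodMk hmω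
  rw [hEvent, ← Measure.map_apply_of_aemeasurable hpair hAmeas,
    (indepFun_iff_map_prod_eq_prod_map_map hmθ hmω).mp hindep]
  rw [hθ, hω]
  unfold ProbabilityTheory.cond
  rw [prod_smul_apply _ _ hAmeas, hI1, hI2]
  -- now the RHS
  set P : Measure (ℝ × ℝ) :=
    (volume.restrict (Set.Icc (0:ℝ) c1)).prod (volume.restrict (Set.Icc (0:ℝ) c2)) with hP
  have hPfin : P A ≠ ⊤ := by
    have : P A ≤ P Set.univ := measure_mono (Set.subset_univ _)
    have hPuniv : P Set.univ < ⊤ := by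
      rw [hP, ← Set.univ_prod_univ, Measure.prod_prod]
      simp only [Measure.restrict_apply MeasurableSet.univ, Set.univ_inter, hI1, hI2]
      exact ENNReal.mul_lt_top ENNReal.ofReal_lt_top ENNReal.ofReal_lt_top
    exact (lt_of_le_of_lt this hPuniv).ne
  -- rewrite integrand as indicator
  have hind : ∀ θ' ω', (if (⨆ ij : Fin No × Fin Ns,
        (inner ℝ (satXij No Ns φ r θ' ω' ij.1 ij.2) u : ℝ) / (r * e)) < C
      then (1:ℝ) else 0) = Set.indicator A (fun _ => (1:ℝ)) (θ', ω') := by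
    intro θ' ω'
    rw [Set.indicator_apply]
    exact if_congr (by rw [ciSup_lt_iff']; rfl) rfl rfl
  have hint : ∫ θ' in (0:ℝ)..c1, ∫ ω' in (0:ℝ)..c2,
      (if (⨆ ij : Fin No × Fin Ns,
        (inner ℝ (satXij No Ns φ r θ' ω' ij.1 ij.2) u : ℝ) / (r * e)) < C
      then (1:ℝ) else 0) = (P A).toReal := by
    have hP' : P = (volume.restrict (Set.Ioc (0:ℝ) c1)).prod
        (volume.restrict (Set.Ioc (0:ℝ) c2)) := by
      rw [hP, Measure.restrict_congr_set Ioc_ae_eq_Icc,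
        Measure.restrict_congr_set Ioc_ae_eq_Icc]
    have hInt : Integrable (Set.indicator A (fun _ => (1:ℝ)))
        ((volume.restrict (Set.Ioc (0:ℝ) c1)).prod (volume.restrict (Set.Ioc (0:ℝ) c2))) := by
      rw [integrable_indicator_iff hAmeas]
      refine integrableOn_const ?_
      rw [← hP']
      exact hPfin
    calc ∫ θ' in (0:ℝ)..c1, ∫ ω' in (0:ℝ)..c2,
        (if (⨆ ij : Fin No × Fin Ns,
          (inner ℝ (satXij No Ns φ r θ' ω' ij.1 ij.2) u : ℝ) / (r * e)) < C
        then (1:ℝ) else 0)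
        = ∫ θ' in Set.Ioc (0:ℝ) c1, ∫ ω' in Set.Ioc (0:ℝ) c2,
            Set.indicator A (fun _ => (1:ℝ)) (θ', ω') := by
          rw [intervalIntegral.integral_of_le hc1pos.le]
          refine setIntegral_congr_fun measurableSet_Ioc fun θ' _ => ?_
          rw [intervalIntegral.integral_of_le hc2pos.le]
          refine setIntegral_congr_fun measurableSet_Ioc fun ω' _ => ?_
          exact hind θ' ω'
      _ = ∫ p, Set.indicator A (fun _ => (1:ℝ)) p
            ∂((volume.restrict (Set.Ioc (0:ℝ) c1)).prod (volume.restrict (Set.Ioc (0:ℝ) c2))) :=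
          (integral_prod _ hInt).symm
      _ = (P A).toReal := by
          rw [hP', show (Set.indicator A (fun _ => (1:ℝ))) = Set.indicator A 1 from rfl,
            integral_indicator_one hAmeas, measureReal_def]
  rw [hint]
  -- final arithmetic
  have hc1c2 : (No : ℝ) * Ns / (4 * π ^ 2) = (c1 * c2)⁻¹ := by
    rw [hc1, hc2]
    field_simp
    ring
  rw [hc1c2, ENNReal.ofReal_mul (by positivity), ENNReal.ofReal_toReal hPfin]
  have hkey : ENNReal.ofReal (c1 * c2)⁻¹ =
      (ENNReal.ofReal c1)⁻¹ * (ENNReal.ofReal c2)⁻¹ := by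
    rw [ENNReal.ofReal_inv_of_pos (by positivity), ENNReal.ofReal_mul hc1pos.le,
      ENNReal.mul_inv (Or.inl (by simp [ENNReal.ofReal_eq_zero, not_le, hc1pos]))
        (Or.inl ENNReal.ofReal_ne_top)]
  rw [hkey, mul_assoc]
end

section
/- Let 0 < e < r, let N_o, N_s ≥ 1 be integers, let φ, l_u ∈ ℝ, p > 0, α > 0, s ≥ 0, g_t, g_r > 0 and d_g > 0. Let θ̄ and ω̄ be independent random variables uniformly distributed on [0, 2π/N_o] and [0, 2π/N_s], and let (H_{i,j}), i = 1,…,N_o, j = 1,…,N_s, be i.i.d. nonnegative random variables, independent of (θ̄, ω̄), with Laplace transform L_H(x) = E[exp(−x·H)]. Define the total interference T = Σ_{i,j} c_{i,j} · p · G_{i,j} · H_{i,j} · ‖X_{i,j} − u‖^{−α}. Then E[exp(−s·T)] = (N_o·N_s/(4π²)) · ∫₀^{2π/N_o} ∫₀^{2π/N_s} Π_{i,j : c_{i,j} = 1} L_H( s·p·G_{i,j}·‖X_{i,j} − u‖^{−α} ) dω̄' dθ̄', where in the integrand the satellite positions, visibility indicators c_{i,j} and gains G_{i,j} are computed from the deterministic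 offsets (θ̄', ω̄'). -/
open Real MeasureTheory ProbabilityTheory
open scoped Classical

/-- Visibility indicator: `c = 1` if `⟨X, u⟩/(‖X‖·‖u‖) ≥ e/r`, `c = 0` otherwise. -/
noncomputable def visInd (r e : ℝ) (X u : EuclideanSpace ℝ (Fin 3)) : ℝ :=
  if e / r ≤ (inner ℝ X u : ℝ) / (‖X‖ * ‖u‖) then 1 else 0

/-- Antenna gain: `G = g_t·g_r` if `⟨X, u⟩/(‖X‖·‖u‖) ≥ (r² + e² − d_g²)/(2·r·e)`,
and `G = g_r` otherwise. -/
noncomputable def gain (r e dg gt gr : ℝ) (X u : EuclideanSpace ℝ (Fin 3)) : ℝ :=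
  if (r ^ 2 + e ^ 2 - dg ^ 2) / (2 * r * e) ≤ (inner ℝ X u : ℝ) / (‖X‖ * ‖u‖) then
    gt * gr
  else gr

lemma measurable_satPos (φ r : ℝ) (c₁ c₂ : ℝ) :
    Measurable (fun v : ℝ × ℝ => satPos (c₁ + v.1) (c₂ + v.2) φ r) := by
  have htan : Measurable (fun v : ℝ × ℝ => Real.tan (c₂ + v.2)) := by
    simp only [Real.tan_eq_sin_div_cos]
    exact ((Real.continuous_sin.comp (continuous_const.add continuous_snd)).measurable).div
      ((Real.continuous_cos.comp (continuous_const.add continuous_snd)).measurable)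
  have h1 : Measurable (fun v : ℝ × ℝ => c₁ + v.1) := measurable_const.add measurable_fst
  have h2 : Measurable (fun v : ℝ × ℝ => c₂ + v.2) := measurable_const.add measurable_snd
  have hrho : Measurable (fun v : ℝ × ℝ =>
      r * Real.sqrt (cos (c₂ + v.2) ^ 2 + sin (c₂ + v.2) ^ 2 * cos φ ^ 2)) :=
    measurable_const.mul (((h2.cos.pow_const 2).add
      ((h2.sin.pow_const 2).mul measurable_const)).sqrt)
  have hang : Measurable (fun v : ℝ × ℝ => arctan (tan (c₂ + v.2) * cos φ) + (c₁ + v.1)) :=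
    ((htan.mul measurable_const).arctan).add h1
  unfold satPos
  refine (WithLp.measurable_toLp 2 _).comp ?_
  rw [measurable_pi_iff]
  intro i
  fin_cases i
  · exact hrho.mul hang.cos
  · exact hrho.mul hang.sin
  · exact (measurable_const.mul h2.sin).mul measurable_const

/-- The deterministic coefficient of `H ij` in the interference sum. -/
noncomputable def coefA (No Ns : ℕ) (φ r e dg gt gr lu p α : ℝ)
    (v : ℝ × ℝ) (ij : Fin No × Fin Ns) : ℝ :=
  visInd r e (satXij No Ns φ r v.1 v.2 ij.1 ij.2) (userPos e lu) * p *
    gain r e dg gt gr (satXij No Ns φ r v.1 v.2 ij.1 ij.2) (userPos e lu) *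
    ‖satXij No Ns φ r v.1 v.2 ij.1 ij.2 - userPos e lu‖ ^ (-α)

lemma measurable_satXij (No Ns : ℕ) (φ r : ℝ) (i : Fin No) (j : Fin Ns) :
    Measurable (fun v : ℝ × ℝ => satXij No Ns φ r v.1 v.2 i j) :=
  measurable_satPos φ r _ _

lemma measurable_rpow_neg (α : ℝ) (hα : 0 < α) {β : Type*} [MeasurableSpace β]
    {g : β → ℝ} (hg : Measurable g) (hg0 : ∀ b, 0 ≤ g b) :
    Measurable fun b => g b ^ (-α) := by
  have heq : (fun b => g b ^ (-α)) =
      fun b => if g b = 0 then 0 else Real.exp (Real.log (g b) * (-α)) := by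
    funext b
    by_cases h : g b = 0
    · simp [h, Real.zero_rpow (neg_ne_zero.mpr hα.ne')]
    · rw [if_neg h, Real.rpow_def_of_pos (lt_of_le_of_ne (hg0 b) (Ne.symm h))]
  rw [heq]
  exact Measurable.ite (hg (measurableSet_singleton 0)) measurable_const
    ((hg.log.mul measurable_const).exp)

lemma measurable_coefA (No Ns : ℕ) (φ r e dg gt gr lu p α : ℝ) (hα : 0 < α)
    (ij : Fin No × Fin Ns) :
    Measurable (fun v : ℝ × ℝ => coefA No Ns φ r e dg gt gr lu p α v ij) := by
  have hS := measurable_satXij No Ns φ r ij.1 ij.2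
  have hq : Measurable (fun v : ℝ × ℝ =>
      (inner ℝ (satXij No Ns φ r v.1 v.2 ij.1 ij.2) (userPos e lu) : ℝ) /
        (‖satXij No Ns φ r v.1 v.2 ij.1 ij.2‖ * ‖userPos e lu‖)) :=
    (hS.inner measurable_const).div (hS.norm.mul measurable_const)
  have hvis : Measurable (fun v : ℝ × ℝ =>
      visInd r e (satXij No Ns φ r v.1 v.2 ij.1 ij.2) (userPos e lu)) := by
    unfold visInd
    exact Measurable.ite (measurableSet_le measurable_const hq)
      measurable_const measurable_const
  have hg : Measurable (fun v : ℝ × ℝ =>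
      gain r e dg gt gr (satXij No Ns φ r v.1 v.2 ij.1 ij.2) (userPos e lu)) := by
    unfold gain
    exact Measurable.ite (measurableSet_le measurable_const hq)
      measurable_const measurable_const
  have hd : Measurable (fun v : ℝ × ℝ =>
      ‖satXij No Ns φ r v.1 v.2 ij.1 ij.2 - userPos e lu‖ ^ (-α)) :=
    measurable_rpow_neg α hα (hS.sub measurable_const).norm (fun _ => norm_nonneg _)
  exact ((hvis.mul measurable_const).mul hg).mul hd

lemma coefA_nonneg (No Ns : ℕ) (φ r e dg gt gr lu p α : ℝ)
    (hp : 0 ≤ p) (hgt : 0 ≤ gt) (hgr : 0 ≤ gr) (hgtr : 0 ≤ gt * gr)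
    (v : ℝ × ℝ) (ij : Fin No × Fin Ns) :
    0 ≤ coefA No Ns φ r e dg gt gr lu p α v ij := by
  unfold coefA visInd gain
  have h1 : (0:ℝ) ≤ ‖satXij No Ns φ r v.1 v.2 ij.1 ij.2 - userPos e lu‖ ^ (-α) :=
    Real.rpow_nonneg (norm_nonneg _) _
  refine mul_nonneg (mul_nonneg (mul_nonneg ?_ hp) ?_) h1 <;>
    split <;> simp [hgt, hgr, hgtr]

/-- The joint integrand. -/
noncomputable def intgd (No Ns : ℕ) (φ r e dg gt gr lu p α s : ℝ)
    (q : (ℝ × ℝ) × (Fin No × Fin Ns → ℝ)) : ℝ :=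
  Real.exp (-(s * ∑ ij : Fin No × Fin Ns,
    coefA No Ns φ r e dg gt gr lu p α q.1 ij * q.2 ij))

lemma measurable_intgd (No Ns : ℕ) (φ r e dg gt gr lu p α s : ℝ) (hα : 0 < α) :
    Measurable (intgd No Ns φ r e dg gt gr lu p α s) := by
  unfold intgd
  exact ((measurable_const.mul (Finset.measurable_sum Finset.univ fun ij _ =>
    ((measurable_coefA No Ns φ r e dg gt gr lu p α hα ij).comp measurable_fst).mul
      ((measurable_pi_apply ij).comp measurable_snd))).neg).exp

/-- **Theorem 4 (Laplace transform of the total interference).**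
With independent uniform offsets `θ̄ ~ U[0, 2π/No]`, `ω̄ ~ U[0, 2π/Ns]` and i.i.d.
nonnegative fadings `H_{i,j}` independent of `(θ̄, ω̄)` with Laplace transform
`L_H(x) = E[e^{−xH}]`, the total interference
`T = Σ_{i,j} c_{i,j}·p·G_{i,j}·H_{i,j}·‖X_{i,j} − u‖^{−α}` satisfies
`E[e^{−sT}] = (No·Ns/(4π²)) ∫₀^{2π/No} ∫₀^{2π/Ns}
  Π_{i,j : c_{i,j}=1} L_H(s·p·G_{i,j}·‖X_{i,j} − u‖^{−α}) dω̄' dθ̄'`. -/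
theorem laplace_transform_total_interference
    {Ω : Type*} [MeasureSpace Ω] [IsProbabilityMeasure (ℙ : Measure Ω)]
    (r e : ℝ) (he : 0 < e) (her : e < r)
    (No Ns : ℕ) (hNo : 1 ≤ No) (hNs : 1 ≤ Ns)
    (φ lu p α s gt gr dg : ℝ)
    (hp : 0 < p) (hα : 0 < α) (hs : 0 ≤ s)
    (hgt : 0 < gt) (hgr : 0 < gr) (hdg : 0 < dg)
    (θb ωb : Ω → ℝ)
    (hθ : pdf.IsUniform θb (Set.Icc 0 (2 * π / No)) ℙ volume)
    (hω : pdf.IsUniform ωb (Set.Icc 0 (2 * π / Ns)) ℙ volume)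
    (hθω : IndepFun θb ωb ℙ)
    (H : Fin No × Fin Ns → Ω → ℝ)
    (hHmeas : ∀ ij, Measurable (H ij))
    (hHnonneg : ∀ ij x, 0 ≤ H ij x)
    (hHiid : iIndepFun H ℙ)
    (hHident : ∀ ij ij', IdentDistrib (H ij) (H ij') ℙ ℙ)
    (hHindep : IndepFun (fun x => (θb x, ωb x)) (fun x ij => H ij x) ℙ)
    (LH : ℝ → ℝ)
    (hLH : ∀ ij x, LH x = ∫ a, Real.exp (-(x * H ij a)) ∂ℙ) :
    (∫ x, Real.exp (-(s * ∑ ij : Fin No × Fin Ns,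
        visInd r e (satXij No Ns φ r (θb x) (ωb x) ij.1 ij.2) (userPos e lu) * p *
          gain r e dg gt gr (satXij No Ns φ r (θb x) (ωb x) ij.1 ij.2)
            (userPos e lu) *
          H ij x *
          ‖satXij No Ns φ r (θb x) (ωb x) ij.1 ij.2 - userPos e lu‖ ^ (-α))) ∂ℙ) =
      (No * Ns / (4 * π ^ 2)) *
        ∫ θ' in (0 : ℝ)..(2 * π / No), ∫ ω' in (0 : ℝ)..(2 * π / Ns),
          ∏ ij : Fin No × Fin Ns,
            if visInd r e (satXij No Ns φ r θ' ω' ij.1 ij.2) (userPos e lu) = 1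
            then
              LH (s * p *
                gain r e dg gt gr (satXij No Ns φ r θ' ω' ij.1 ij.2) (userPos e lu) *
                ‖satXij No Ns φ r θ' ω' ij.1 ij.2 - userPos e lu‖ ^ (-α))
            else 1 := by
  have hπ := Real.pi_pos
  have hNo0 : (0:ℝ) < No := by exact_mod_cast hNo
  have hNs0 : (0:ℝ) < Ns := by exact_mod_cast hNs
  set L₁ : ℝ := 2 * π / No with hL₁def
  set L₂ : ℝ := 2 * π / Ns with hL₂def
  have hL1 : 0 < L₁ := by positivity
  have hL2 : 0 < L₂ := by positivity
  have vol1 : volume (Set.Icc (0:ℝ) L₁) = ENNReal.ofReal L₁ := by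
    rw [Real.volume_Icc, sub_zero]
  have vol2 : volume (Set.Icc (0:ℝ) L₂) = ENNReal.ofReal L₂ := by
    rw [Real.volume_Icc, sub_zero]
  have hv1ne : volume (Set.Icc (0:ℝ) L₁) ≠ 0 := by
    rw [vol1]; simp [ENNReal.ofReal_eq_zero, not_le, hL1]
  have hv2ne : volume (Set.Icc (0:ℝ) L₂) ≠ 0 := by
    rw [vol2]; simp [ENNReal.ofReal_eq_zero, not_le, hL2]
  have hv1t : volume (Set.Icc (0:ℝ) L₁) ≠ ⊤ := by rw [vol1]; exact ENNReal.ofReal_ne_top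
  have hv2t : volume (Set.Icc (0:ℝ) L₂) ≠ ⊤ := by rw [vol2]; exact ENNReal.ofReal_ne_top
  have hθae : AEMeasurable θb ℙ := pdf.IsUniform.aemeasurable hv1ne hv1t hθ
  have hωae : AEMeasurable ωb ℙ := pdf.IsUniform.aemeasurable hv2ne hv2t hω
  have hΘae : AEMeasurable (fun x => (θb x, ωb x)) ℙ := hθae.prodMk hωae
  have hH' : Measurable (fun x (ij : Fin No × Fin Ns) => H ij x) :=
    measurable_pi_lambda _ hHmeas
  set ν : Measure (Fin No × Fin Ns → ℝ) := Measure.map (fun x ij => H ij x) ℙ with hνdef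
  have hfmeas : Measurable (intgd No Ns φ r e dg gt gr lu p α s) :=
    measurable_intgd No Ns φ r e dg gt gr lu p α s hα
  haveI : IsProbabilityMeasure ν := hνdef ▸ Measure.isProbabilityMeasure_map (μ := ℙ) hH'.aemeasurable
  haveI : IsProbabilityMeasure (Measure.map (fun x => (θb x, ωb x)) ℙ) :=
    Measure.isProbabilityMeasure_map hΘae
  -- step 1: rewrite the LHS integrand
  have key1 : (∫ x, Real.exp (-(s * ∑ ij : Fin No × Fin Ns,
        visInd r e (satXij No Ns φ r (θb x) (ωb x) ij.1 ij.2) (userPos e lu) * p *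
          gain r e dg gt gr (satXij No Ns φ r (θb x) (ωb x) ij.1 ij.2)
            (userPos e lu) *
          H ij x *
          ‖satXij No Ns φ r (θb x) (ωb x) ij.1 ij.2 - userPos e lu‖ ^ (-α))) ∂ℙ)
      = ∫ x, intgd No Ns φ r e dg gt gr lu p α s
          ((θb x, ωb x), fun ij => H ij x) ∂ℙ := by
    refine integral_congr_ae (Filter.Eventually.of_forall fun x => ?_)
    unfold intgd
    refine congrArg Real.exp (congrArg Neg.neg (congrArg (fun t => s * t) ?_))
    refine Finset.sum_congr rfl fun ij _ => ?_
    unfold coefA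
    ring
  -- a.e. bound on the product space
  have hKm : MeasurableSet {h : Fin No × Fin Ns → ℝ | ∀ ij, 0 ≤ h ij} := by
    have : {h : Fin No × Fin Ns → ℝ | ∀ ij, 0 ≤ h ij}
        = ⋂ ij, {h : Fin No × Fin Ns → ℝ | 0 ≤ h ij} := by ext; simp
    rw [this]
    exact MeasurableSet.iInter fun ij =>
      measurableSet_le measurable_const (measurable_pi_apply ij)
  have hν1 : ν {h | ∀ ij, 0 ≤ h ij}ᶜ = 0 := by
    rw [hνdef, Measure.map_apply hH' hKm.compl]
    have : (fun x (ij : Fin No × Fin Ns) => H ij x) ⁻¹'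
        {h : Fin No × Fin Ns → ℝ | ∀ ij, 0 ≤ h ij}ᶜ = ∅ := by
      ext x
      simp only [Set.mem_preimage, Set.mem_compl_iff, Set.mem_setOf_eq,
        Set.mem_empty_iff_false, iff_false, not_not]
      exact fun ij => hHnonneg ij x
    rw [this, measure_empty]
  have hbound : ∀ᵐ q ∂((Measure.map (fun x => (θb x, ωb x)) ℙ).prod ν),
      ‖intgd No Ns φ r e dg gt gr lu p α s q‖ ≤ 1 := by
    have hprod0 : ((Measure.map (fun x => (θb x, ωb x)) ℙ).prod ν)
        {q : (ℝ × ℝ) × (Fin No × Fin Ns → ℝ) | ¬ ∀ ij, 0 ≤ q.2 ij} = 0 := by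
      have hpre : {q : (ℝ × ℝ) × (Fin No × Fin Ns → ℝ) | ¬ ∀ ij, 0 ≤ q.2 ij}
          = Prod.snd ⁻¹' {h : Fin No × Fin Ns → ℝ | ∀ ij, 0 ≤ h ij}ᶜ := rfl
      rw [hpre, ← Measure.map_apply measurable_snd hKm.compl, Measure.map_snd_prod,
        Measure.smul_apply, hν1, smul_zero]
    have hae : ∀ᵐ q ∂((Measure.map (fun x => (θb x, ωb x)) ℙ).prod ν),
        ∀ ij, 0 ≤ q.2 ij := ae_iff.mpr hprod0
    filter_upwards [hae] with q hq
    unfold intgd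
    rw [Real.norm_eq_abs, Real.abs_exp, Real.exp_le_one_iff, neg_nonpos]
    exact mul_nonneg hs (Finset.sum_nonneg fun ij _ => mul_nonneg
      (coefA_nonneg No Ns φ r e dg gt gr lu p α hp.le hgt.le hgr.le
        (mul_nonneg hgt.le hgr.le) q.1 ij) (hq ij))
  have hfint : Integrable (intgd No Ns φ r e dg gt gr lu p α s)
      ((Measure.map (fun x => (θb x, ωb x)) ℙ).prod ν) :=
    Integrable.mono' (integrable_const 1) hfmeas.aestronglyMeasurable hbound
  -- step 2: independence splits the measure
  have hmapfull : Measure.map (fun x => ((θb x, ωb x), fun ij => H ij x)) ℙ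
      = (Measure.map (fun x => (θb x, ωb x)) ℙ).prod ν :=
    (indepFun_iff_map_prod_eq_prod_map_map hΘae hH'.aemeasurable).mp hHindep
  have e1 : ∫ x, intgd No Ns φ r e dg gt gr lu p α s
        ((θb x, ωb x), fun ij => H ij x) ∂ℙ
      = ∫ v, (∫ h, intgd No Ns φ r e dg gt gr lu p α s (v, h) ∂ν)
          ∂(Measure.map (fun x => (θb x, ωb x)) ℙ) := by
    rw [← integral_prod _ hfint, ← hmapfull,
      integral_map (hΘae.prodMk hH'.aemeasurable) hfmeas.aestronglyMeasurable]
  -- step 3: inner integral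
  have hinner : ∀ θ' ω' : ℝ,
      (∫ h, intgd No Ns φ r e dg gt gr lu p α s ((θ', ω'), h) ∂ν)
      = ∏ ij : Fin No × Fin Ns,
          (if visInd r e (satXij No Ns φ r θ' ω' ij.1 ij.2) (userPos e lu) = 1
          then LH (s * p *
              gain r e dg gt gr (satXij No Ns φ r θ' ω' ij.1 ij.2) (userPos e lu) *
              ‖satXij No Ns φ r θ' ω' ij.1 ij.2 - userPos e lu‖ ^ (-α))
          else 1) := by
    intro θ' ω'
    have hm2 : Measurable (fun h : Fin No × Fin Ns → ℝ =>
        intgd No Ns φ r e dg gt gr lu p α s ((θ', ω'), h)) :=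
      hfmeas.comp measurable_prodMk_left
    rw [hνdef, integral_map hH'.aemeasurable hm2.aestronglyMeasurable]
    set Z : Fin No × Fin Ns → Ω → ℝ := fun ij y =>
      s * coefA No Ns φ r e dg gt gr lu p α (θ', ω') ij * H ij y with hZdef
    have hZmeas : ∀ ij, Measurable (Z ij) := fun ij => (hHmeas ij).const_mul _
    have hZindep : iIndepFun Z ℙ :=
      hHiid.comp (fun ij y => s * coefA No Ns φ r e dg gt gr lu p α (θ', ω') ij * y)
        (fun ij => measurable_id.const_mul _)
    have hz : ∀ x, intgd No Ns φ r e dg gt gr lu p α s ((θ', ω'), fun ij => H ij x)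
        = Real.exp ((-1) * (∑ ij : Fin No × Fin Ns, Z ij) x) := by
      intro x
      unfold intgd
      congr 1
      rw [Finset.sum_apply, neg_one_mul, neg_inj, Finset.mul_sum]
      exact Finset.sum_congr rfl fun ij _ => by rw [hZdef]; ring
    calc ∫ x, intgd No Ns φ r e dg gt gr lu p α s ((θ', ω'), fun ij => H ij x) ∂ℙ
        = mgf (∑ ij : Fin No × Fin Ns, Z ij) ℙ (-1) := by
          unfold mgf
          exact integral_congr_ae (Filter.Eventually.of_forall hz)
      _ = ∏ ij : Fin No × Fin Ns, mgf (Z ij) ℙ (-1) :=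
          hZindep.mgf_sum hZmeas Finset.univ
      _ = _ := by
          refine Finset.prod_congr rfl fun ij _ => ?_
          unfold mgf
          by_cases hc : e / r ≤ (inner ℝ (satXij No Ns φ r θ' ω' ij.1 ij.2)
              (userPos e lu) : ℝ) /
              (‖satXij No Ns φ r θ' ω' ij.1 ij.2‖ * ‖userPos e lu‖)
          · have hv1 : visInd r e (satXij No Ns φ r θ' ω' ij.1 ij.2) (userPos e lu)
                = 1 := by unfold visInd; exact if_pos hc
            rw [if_pos hv1, hLH ij]
            refine integral_congr_ae (Filter.Eventually.of_forall fun x => ?_)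
            rw [hZdef]
            unfold coefA
            simp only
            rw [hv1]
            congr 1
            ring
          · have hv0 : visInd r e (satXij No Ns φ r θ' ω' ij.1 ij.2) (userPos e lu)
                = 0 := by unfold visInd; exact if_neg hc
            rw [if_neg (by rw [hv0]; norm_num)]
            have hone : ∀ x, Real.exp (-1 * Z ij x) = 1 := by
              intro x
              rw [hZdef]
              unfold coefA
              simp only
              rw [hv0]
              simp
            rw [integral_congr_ae (Filter.Eventually.of_forall hone)]
            simp
  -- step 4: outer integral
  have hθ' : Measure.map θb ℙ = volume[|Set.Icc (0:ℝ) L₁] := hθ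
  have hω' : Measure.map ωb ℙ = volume[|Set.Icc (0:ℝ) L₂] := hω
  have hmapΘ : (Measure.map (fun x => (θb x, ωb x)) ℙ)
      = (volume[|Set.Icc (0:ℝ) L₁]).prod (volume[|Set.Icc (0:ℝ) L₂]) := by
    rw [(indepFun_iff_map_prod_eq_prod_map_map hθae hωae).mp hθω, hθ', hω']
  haveI i1 : IsProbabilityMeasure (volume[|Set.Icc (0:ℝ) L₁]) :=
    cond_isProbabilityMeasure_of_finite hv1ne hv1t
  haveI i2 : IsProbabilityMeasure (volume[|Set.Icc (0:ℝ) L₂]) :=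
    cond_isProbabilityMeasure_of_finite hv2ne hv2t
  have hg0int : Integrable
      (fun v => ∫ h, intgd No Ns φ r e dg gt gr lu p α s (v, h) ∂ν)
      ((volume[|Set.Icc (0:ℝ) L₁]).prod (volume[|Set.Icc (0:ℝ) L₂])) := by
    rw [← hmapΘ]
    exact hfint.integral_prod_left
  have e2 : ∫ v, (∫ h, intgd No Ns φ r e dg gt gr lu p α s (v, h) ∂ν)
        ∂(Measure.map (fun x => (θb x, ωb x)) ℙ)
      = ∫ θ'', (∫ ω'', (∫ h, intgd No Ns φ r e dg gt gr lu p α s ((θ'', ω''), h) ∂ν)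
          ∂(volume[|Set.Icc (0:ℝ) L₂])) ∂(volume[|Set.Icc (0:ℝ) L₁]) := by
    rw [hmapΘ, integral_prod _ hg0int]
  rw [key1, e1, e2]
  simp only [hinner]
  have hcond1 : volume[|Set.Icc (0:ℝ) L₁]
      = (volume (Set.Icc (0:ℝ) L₁))⁻¹ • volume.restrict (Set.Icc (0:ℝ) L₁) := rfl
  have hcond2 : volume[|Set.Icc (0:ℝ) L₂]
      = (volume (Set.Icc (0:ℝ) L₂))⁻¹ • volume.restrict (Set.Icc (0:ℝ) L₂) := rfl
  rw [hcond1, hcond2]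
  simp only [integral_smul_measure]
  rw [integral_smul]
  have ht1 : ((volume (Set.Icc (0:ℝ) L₁))⁻¹).toReal = L₁⁻¹ := by
    rw [vol1, ← ENNReal.ofReal_inv_of_pos hL1,
      ENNReal.toReal_ofReal (inv_nonneg.mpr hL1.le)]
  have ht2 : ((volume (Set.Icc (0:ℝ) L₂))⁻¹).toReal = L₂⁻¹ := by
    rw [vol2, ← ENNReal.ofReal_inv_of_pos hL2,
      ENNReal.toReal_ofReal (inv_nonneg.mpr hL2.le)]
  rw [ht1, ht2]
  simp only [integral_Icc_eq_integral_Ioc]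
  rw [← intervalIntegral.integral_of_le hL1.le]
  simp only [← intervalIntegral.integral_of_le hL2.le]
  rw [smul_eq_mul, smul_eq_mul, ← mul_assoc]
  congr 1
  rw [hL₁def, hL₂def]
  field_simp
  ring
end
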